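/- Let ℓ₁, ℓ₂, ℓ₃ be three pairwise skew lines in PG(3,F) lying on a hyperbolic quadric Q, and suppose ℓ₄ is a line disjoint from Q. Then {ℓ₁, ℓ₂, ℓ₃, ℓ₄} is a generator set with respect to planes: every plane Π of PG(3,F) meets the union of these lines in a set of points spanning Π. -/

import Mathlib

open Module Submodule


/-- If `ℓ₁, ℓ₂, ℓ₃` are pairwise skew lines on a hyperbolic quadric `Q` of `PG(3,F)`
(the isotropic vectors of a symmetric nondegenerate bilinear form `B`), and `ℓ₄` is a
line disjoint from `Q`, then `{ℓ₁,ℓ₂,ℓ₃,ℓ₄}` is a generator set with respect to planes: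
every plane is spanned by its intersection with the union of the four lines. -/
theorem four_lines_generator_PG3 (F : Type*) [Field F]
    (B : LinearMap.BilinForm F (Fin 4 → F))
    (hBsymm : ∀ v w, B v w = B w v) (hBnd : B.Nondegenerate)
    (ℓ₁ ℓ₂ ℓ₃ ℓ₄ : Submodule F (Fin 4 → F))
    (h₁ : Module.finrank F ℓ₁ = 2) (h₂ : Module.finrank F ℓ₂ = 2)
    (h₃ : Module.finrank F ℓ₃ = 2) (h₄ : Module.finrank F ℓ₄ = 2)
    (h12 : ℓ₁ ⊓ ℓ₂ = ⊥) (h13 : ℓ₁ ⊓ ℓ₃ = ⊥) (h23 : ℓ₂ ⊓ ℓ₃ = ⊥)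
    (hq₁ : ∀ v ∈ ℓ₁, B v v = 0) (hq₂ : ∀ v ∈ ℓ₂, B v v = 0) (hq₃ : ∀ v ∈ ℓ₃, B v v = 0)
    (hq₄ : ∀ v ∈ ℓ₄, v ≠ 0 → B v v ≠ 0) :
    ∀ Pl : Submodule F (Fin 4 → F), Module.finrank F Pl = 3 →
      Submodule.span F
        (((ℓ₁ : Set (Fin 4 → F)) ∪ (ℓ₂ : Set (Fin 4 → F)) ∪ (ℓ₃ : Set (Fin 4 → F)) ∪
          (ℓ₄ : Set (Fin 4 → F))) ∩ (Pl : Set (Fin 4 → F))) = Pl := by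
  intro Pl hPl
  -- lines ℓᵢ (i=1,2,3) are disjoint from ℓ₄
  have hd4 : ∀ (ℓ : Submodule F (Fin 4 → F)), (∀ v ∈ ℓ, B v v = 0) → ℓ ⊓ ℓ₄ = ⊥ := by
    intro ℓ hq
    rw [Submodule.eq_bot_iff]
    rintro v hv
    rw [Submodule.mem_inf] at hv
    by_contra hv0
    exact hq₄ v hv.2 hv0 (hq v hv.1)
  have hd14 := hd4 ℓ₁ hq₁
  have hd24 := hd4 ℓ₂ hq₂
  have hd34 := hd4 ℓ₃ hq₃
  set S := Submodule.span F
        (((ℓ₁ : Set (Fin 4 → F)) ∪ (ℓ₂ : Set (Fin 4 → F)) ∪ (ℓ₃ : Set (Fin 4 → F)) ∪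
          (ℓ₄ : Set (Fin 4 → F))) ∩ (Pl : Set (Fin 4 → F))) with hS
  have hSPl : S ≤ Pl := by
    rw [hS]
    apply Submodule.span_le.2
    intro v hv
    exact hv.2
  -- each intersection lies in S
  have hP1S : ℓ₁ ⊓ Pl ≤ S := by
    intro v hv; rw [Submodule.mem_inf] at hv
    exact Submodule.subset_span ⟨Or.inl (Or.inl (Or.inl hv.1)), hv.2⟩
  have hP2S : ℓ₂ ⊓ Pl ≤ S := by
    intro v hv; rw [Submodule.mem_inf] at hv
    exact Submodule.subset_span ⟨Or.inl (Or.inl (Or.inr hv.1)), hv.2⟩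
  have hP3S : ℓ₃ ⊓ Pl ≤ S := by
    intro v hv; rw [Submodule.mem_inf] at hv
    exact Submodule.subset_span ⟨Or.inl (Or.inr hv.1), hv.2⟩
  have hP4S : ℓ₄ ⊓ Pl ≤ S := by
    intro v hv; rw [Submodule.mem_inf] at hv
    exact Submodule.subset_span ⟨Or.inr hv.1, hv.2⟩
  -- lower bound on finrank of intersections
  have hV : finrank F (Fin 4 → F) = 4 := Module.finrank_fin_fun F
  have hlow : ∀ (ℓ : Submodule F (Fin 4 → F)), finrank F ℓ = 2 →
      1 ≤ finrank F ↥(ℓ ⊓ Pl) := by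
    intro ℓ hℓ
    have h1 := Submodule.finrank_sup_add_finrank_inf_eq ℓ Pl
    have h2 : finrank F ↥(ℓ ⊔ Pl) ≤ 4 := le_trans (Submodule.finrank_le _) (le_of_eq hV)
    omega
  -- once we find a rank ≥ 3 subspace inside S, we are done
  have finish : 3 ≤ finrank F S → S = Pl := by
    intro h3
    exact Submodule.eq_of_le_of_finrank_le hSPl (by omega)
  have main : ∀ (p q : Submodule F (Fin 4 → F)), p ≤ S → q ≤ S → p ⊓ q = ⊥ →
      2 ≤ finrank F p → 1 ≤ finrank F q → S = Pl := by
    intro p q hpS hqS hpq hp hq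
    apply finish
    have h1 := Submodule.finrank_sup_add_finrank_inf_eq p q
    rw [hpq, finrank_bot] at h1
    have h2 : finrank F ↥(p ⊔ q) ≤ finrank F S :=
      Submodule.finrank_mono (sup_le hpS hqS)
    omega
  -- disjointness of intersections from inf-disjointness of the lines
  have disj : ∀ (a b : Submodule F (Fin 4 → F)), a ⊓ b = ⊥ →
      (a ⊓ Pl) ⊓ (b ⊓ Pl) = ⊥ := by
    intro a b hab
    rw [← le_bot_iff, ← hab]
    exact le_inf (le_trans inf_le_left inf_le_left) (le_trans inf_le_right inf_le_left)
  -- case: some intersection has rank ≥ 2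
  by_cases c1 : 2 ≤ finrank F ↥(ℓ₁ ⊓ Pl)
  · exact main _ _ hP1S hP2S (disj _ _ h12) c1 (hlow ℓ₂ h₂)
  by_cases c2 : 2 ≤ finrank F ↥(ℓ₂ ⊓ Pl)
  · exact main _ _ hP2S hP1S (disj _ _ (by rw [inf_comm, h12])) c2 (hlow ℓ₁ h₁)
  by_cases c3 : 2 ≤ finrank F ↥(ℓ₃ ⊓ Pl)
  · exact main _ _ hP3S hP1S (disj _ _ (by rw [inf_comm, h13])) c3 (hlow ℓ₁ h₁)
  by_cases c4 : 2 ≤ finrank F ↥(ℓ₄ ⊓ Pl)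
  · exact main _ _ hP4S hP1S (disj _ _ (by rw [inf_comm, hd14])) c4 (hlow ℓ₁ h₁)
  -- now all four intersections have rank exactly 1
  have rank1 : ∀ (ℓ : Submodule F (Fin 4 → F)), finrank F ℓ = 2 →
      ¬ 2 ≤ finrank F ↥(ℓ ⊓ Pl) → ∃ v : Fin 4 → F, v ≠ 0 ∧
        ℓ ⊓ Pl = Submodule.span F {v} := by
    intro ℓ hℓ hc
    have h1 := hlow ℓ hℓ
    have hr : finrank F ↥(ℓ ⊓ Pl) = 1 := by omega
    obtain ⟨v, hv, hv0⟩ := Submodule.exists_mem_ne_zero_of_ne_bot (p := ℓ ⊓ Pl)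
      (by intro hb; rw [hb, finrank_bot] at hr; omega)
    refine ⟨v, hv0, ?_⟩
    symm
    apply Submodule.eq_of_le_of_finrank_le
    · rw [Submodule.span_le, Set.singleton_subset_iff]; exact hv
    · rw [finrank_span_singleton hv0]; omega
  obtain ⟨v₁, hv₁0, hv₁⟩ := rank1 ℓ₁ h₁ c1
  obtain ⟨v₂, hv₂0, hv₂⟩ := rank1 ℓ₂ h₂ c2
  obtain ⟨v₃, hv₃0, hv₃⟩ := rank1 ℓ₃ h₃ c3
  obtain ⟨v₄, hv₄0, hv₄⟩ := rank1 ℓ₄ h₄ c4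
  have hm : (ℓ₁ ⊓ Pl) ⊔ (ℓ₂ ⊓ Pl) = Submodule.span F {v₁, v₂} := by
    rw [hv₁, hv₂, ← Submodule.span_union, Set.singleton_union]
  set m := Submodule.span F {v₁, v₂} with hmdef
  have hmrank : finrank F m = 2 := by
    have h1 := Submodule.finrank_sup_add_finrank_inf_eq (ℓ₁ ⊓ Pl) (ℓ₂ ⊓ Pl)
    rw [disj _ _ h12, finrank_bot, hm] at h1
    have e1 : finrank F ↥(ℓ₁ ⊓ Pl) = 1 := by have := hlow ℓ₁ h₁; omega
    have e2 : finrank F ↥(ℓ₂ ⊓ Pl) = 1 := by have := hlow ℓ₂ h₂; omega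
    omega
  have hmS : m ≤ S := by rw [← hm]; exact sup_le hP1S hP2S
  -- subspace not inside m gives rank 3
  have escape : ∀ (ℓ : Submodule F (Fin 4 → F)), finrank F ℓ = 2 →
      finrank F ↥(ℓ ⊓ Pl) = 1 → ℓ ⊓ Pl ≤ S → ¬ (ℓ ⊓ Pl ≤ m) → S = Pl := by
    intro ℓ hℓ hr1 hlS hnle
    have hbot : m ⊓ (ℓ ⊓ Pl) = ⊥ := by
      rw [← Submodule.finrank_eq_zero (R := F)]
      have hlt : m ⊓ (ℓ ⊓ Pl) < ℓ ⊓ Pl := lt_of_le_of_ne inf_le_right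
        (by intro he; exact hnle (by rw [← he]; exact inf_le_left))
      have := Submodule.finrank_lt_finrank_of_lt hlt
      omega
    exact main m (ℓ ⊓ Pl) hmS hlS hbot (by omega) (hlow ℓ hℓ)
  have r3 : finrank F ↥(ℓ₃ ⊓ Pl) = 1 := by have := hlow ℓ₃ h₃; omega
  have r4 : finrank F ↥(ℓ₄ ⊓ Pl) = 1 := by have := hlow ℓ₄ h₄; omega
  by_cases d3 : ℓ₃ ⊓ Pl ≤ m
  swap
  · exact escape ℓ₃ h₃ r3 hP3S d3
  by_cases d4 : ℓ₄ ⊓ Pl ≤ m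
  swap
  · exact escape ℓ₄ h₄ r4 hP4S d4
  -- contradiction: the line m would have four isotropic points but meets ℓ₄
  exfalso
  have hv₁m : v₁ ∈ ℓ₁ ⊓ Pl := hv₁ ▸ Submodule.mem_span_singleton_self v₁
  have hv₂m : v₂ ∈ ℓ₂ ⊓ Pl := hv₂ ▸ Submodule.mem_span_singleton_self v₂
  have hv₃m : v₃ ∈ ℓ₃ ⊓ Pl := hv₃ ▸ Submodule.mem_span_singleton_self v₃
  have hv₄m : v₄ ∈ ℓ₄ ⊓ Pl := hv₄ ▸ Submodule.mem_span_singleton_self v₄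
  have e1 : B v₁ v₁ = 0 := hq₁ v₁ (Submodule.mem_inf.1 hv₁m).1
  have e2 : B v₂ v₂ = 0 := hq₂ v₂ (Submodule.mem_inf.1 hv₂m).1
  have expand : ∀ (a b : F), B (a • v₁ + b • v₂) (a • v₁ + b • v₂)
      = a * b * (B v₁ v₂ + B v₂ v₁) := by
    intro a b
    simp only [map_add, map_smul, LinearMap.add_apply, LinearMap.smul_apply,
      smul_eq_mul, e1, e2]
    ring
  obtain ⟨a, b, hab⟩ := Submodule.mem_span_pair.1 (d3 hv₃m)
  obtain ⟨c, d, hcd⟩ := Submodule.mem_span_pair.1 (d4 hv₄m)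
  have ha : a ≠ 0 := by
    intro h0
    have : v₃ ∈ (ℓ₂ ⊓ Pl) ⊓ (ℓ₃ ⊓ Pl) := by
      refine Submodule.mem_inf.2 ⟨?_, hv₃m⟩
      rw [hv₂, ← hab, h0, zero_smul, zero_add]
      exact Submodule.smul_mem _ b (Submodule.mem_span_singleton_self v₂)
    rw [disj _ _ h23, Submodule.mem_bot] at this
    exact hv₃0 this
  have hb : b ≠ 0 := by
    intro h0
    have : v₃ ∈ (ℓ₁ ⊓ Pl) ⊓ (ℓ₃ ⊓ Pl) := by
      refine Submodule.mem_inf.2 ⟨?_, hv₃m⟩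
      rw [hv₁, ← hab, h0, zero_smul, add_zero]
      exact Submodule.smul_mem _ a (Submodule.mem_span_singleton_self v₁)
    rw [disj _ _ h13, Submodule.mem_bot] at this
    exact hv₃0 this
  have e3 : B v₃ v₃ = 0 := hq₃ v₃ (Submodule.mem_inf.1 hv₃m).1
  have key : B v₁ v₂ + B v₂ v₁ = 0 := by
    have := expand a b
    rw [hab, e3] at this
    have hab0 : a * b ≠ 0 := mul_ne_zero ha hb
    rcases mul_eq_zero.1 this.symm with h | h
    · exact absurd h hab0
    · exact h
  have e4 : B v₄ v₄ = 0 := by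
    rw [← hcd, expand c d, key, mul_zero]
  exact hq₄ v₄ (Submodule.mem_inf.1 hv₄m).1 hv₄0 e4
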